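/- Let s, r, b > 0 with s ≥ 1 and b ≥ 2, and set c = b·r·√(s/(b−1)). Then for all real x₁, x₂, x₃: if V₃(x) = r·x₁² + s·x₂² + s·(x₃−2r)² > c², then V̇₃(x) = 2r·x₁·s·(x₂−x₁) + 2s·x₂·(r·x₁ − x₂ − x₁·x₃) + 2s·(x₃−2r)·(x₁·x₂ − b·x₃) < 0. (First case of Sparrow's elliptical bound for the Lorenz system.) -/

import Mathlib

/-- First case of Sparrow's elliptical bound for the Lorenz system: for `s ≥ 1`,
`b ≥ 2` and `c = b·r·√(s/(b−1))`, outside the ellipsoid `V₃ ≤ c²` the derivative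
`V̇₃` along trajectories is negative. -/
theorem lorenz_ellipse_bound_case1
    (s r b : ℝ) (hs : 0 < s) (hr : 0 < r) (hb : 0 < b)
    (hs1 : 1 ≤ s) (hb2 : 2 ≤ b)
    (c : ℝ) (hc : c = b * r * Real.sqrt (s / (b - 1))) :
    ∀ x₁ x₂ x₃ : ℝ,
      r * x₁ ^ 2 + s * x₂ ^ 2 + s * (x₃ - 2 * r) ^ 2 > c ^ 2 →
      2 * r * x₁ * s * (x₂ - x₁) + 2 * s * x₂ * (r * x₁ - x₂ - x₁ * x₃)
        + 2 * s * (x₃ - 2 * r) * (x₁ * x₂ - b * x₃) < 0 := by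
  intro x₁ x₂ x₃ hV
  have hb1 : (0:ℝ) < b - 1 := by linarith
  have hcsq : c ^ 2 = s * b ^ 2 * r ^ 2 / (b - 1) := by
    rw [hc, mul_pow, mul_pow, Real.sq_sqrt (by positivity : (0:ℝ) ≤ s / (b-1))]
    field_simp
  by_contra h
  push_neg at h
  -- h : 0 ≤ V̇, i.e. s * Q ≤ 0 where Q = r x₁² + x₂² + b(x₃-r)² - b r²
  have hQ : s * (r * x₁ ^ 2 + x₂ ^ 2 + b * (x₃ - r) ^ 2 - b * r ^ 2) ≤ 0 := by
    nlinarith [h]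
  have hQ' : r * x₁ ^ 2 + x₂ ^ 2 + b * (x₃ - r) ^ 2 - b * r ^ 2 ≤ 0 := by
    nlinarith [hQ, hs]
  have hVc : (b - 1) * (r * x₁ ^ 2 + s * x₂ ^ 2 + s * (x₃ - 2 * r) ^ 2)
      > (b - 1) * (s * b ^ 2 * r ^ 2 / (b - 1)) := by
    apply mul_lt_mul_of_pos_left _ hb1
    rw [← hcsq]; exact hV
  rw [mul_div_cancel₀ _ (ne_of_gt hb1)] at hVc
  nlinarith [mul_nonneg hs.le (sq_nonneg ((b - 1) * x₃ - (b - 2) * r)),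
    mul_nonneg (mul_nonneg (sub_nonneg.mpr hs1) hb1.le) (mul_nonneg hr.le (sq_nonneg x₁)),
    mul_nonneg hb1.le (neg_nonneg.mpr hQ),
    mul_nonpos_of_nonneg_of_nonpos hb1.le hQ']
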